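/- Let N=(G,r,p,q,I) be a network in which G is a countable, connected, locally finite simple graph, and let f be a flow of intensity I of finite energy that satisfies Kirchhoff's cycle law. Let R = q r_1 r_2 … be a ray (one-way infinite path) in G starting at q with ∑_{i≥0} r(r_i r_{i+1}) < ∞ (where r_0 = q). Then the series ∑_{i≥0} f(r_i, r_{i+1})·r(r_i r_{i+1}) converges absolutely. Moreover, if S = q s_1 s_2 … is another ray starting at q with ∑_{i≥0} r(s_i s_{i+1}) < ∞, and there exist paths P_1, P_2, … in G that are pairwise vertex-disjoint, where P_k joins the vertex r_{a_k} of R to the vertex s_{b_k} of S with a_1 < a_2 < … and b_1 < b_2 < …, meeting R and S only at these endpoints, and such that ∑_k ∑_{e ∈ E(P_k)} r(e) < ∞, then ∑_{i≥0} f(r_i, r_{i+1})·r(r_i r_{i+1}) = ∑_{i≥0} f(s_i, s_{i+1})·r(s_i s_{i+1}). -/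

import Mathlib

open scoped ENNReal Classical

/-- `f` is a flow of intensity `I` from `p` to `q` in the graph `G`:
it is antisymmetric, vanishes on non-adjacent pairs, and satisfies
Kirchhoff's node law at every vertex (the family of values on edges leaving a
vertex is summable, with sum `I` at `p`, `-I` at `q` and `0` elsewhere). -/
def IsFlow {V : Type} (G : SimpleGraph V) (p q : V) (I : ℝ) (f : V → V → ℝ) : Prop :=
  (∀ x y, f x y = - f y x) ∧
  (∀ x y, ¬ G.Adj x y → f x y = 0) ∧
  ∀ x : V, HasSum (fun y : G.neighborSet x => f x y)
    (if x = p then I else if x = q then -I else 0)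

/-- The energy `W(f) = ∑_{xy ∈ E} f(x,y)² r(xy)`; each edge of `G` corresponds to
exactly two ordered adjacent pairs contributing the same amount, whence the
division by 2. Valued in `ℝ≥0∞`. -/
noncomputable def energy {V : Type} (G : SimpleGraph V) (r : Sym2 V → ℝ)
    (f : V → V → ℝ) : ℝ≥0∞ :=
  (∑' e : {e : V × V // G.Adj e.1 e.2},
      ENNReal.ofReal (f e.1.1 e.1.2 ^ 2 * r s(e.1.1, e.1.2))) / 2

/-- Kirchhoff's cycle law: around every (finite) cycle the potential
differences `f(x,y) · r(xy)` sum to zero. -/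
def CycleLaw {V : Type} (G : SimpleGraph V) (r : Sym2 V → ℝ) (f : V → V → ℝ) : Prop :=
  ∀ (v : V) (c : G.Walk v v), c.IsCycle →
    (c.darts.map (fun d => f d.toProd.1 d.toProd.2 * r d.edge)).sum = 0

/-- `f` is cut-respecting: for every set `X` of vertices containing both `p` and `q`
such that only finitely many edges join `X` to its complement, the net flow
across the cut is zero. -/
def CutRespecting {V : Type} (G : SimpleGraph V) (p q : V) (f : V → V → ℝ) : Prop :=
  ∀ X : Set V, p ∈ X → q ∈ X →
    ∀ hX : {e : V × V | e.1 ∈ X ∧ e.2 ∉ X ∧ G.Adj e.1 e.2}.Finite,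
      ∑ e ∈ hX.toFinset, f e.1 e.2 = 0

namespace RayPotential
open SimpleGraph Walk Filter
variable {V : Type} {G : SimpleGraph V}

noncomputable def wsum (g : V → V → ℝ) {u v : V} (p : G.Walk u v) : ℝ :=
  (p.darts.map (fun d => g d.toProd.1 d.toProd.2)).sum

@[simp] lemma wsum_nil (g : V → V → ℝ) (v : V) :
    wsum g (SimpleGraph.Walk.nil : G.Walk v v) = 0 := rfl

lemma wsum_cons (g : V → V → ℝ) {u v w : V} (h : G.Adj u v) (p : G.Walk v w) :
    wsum g (SimpleGraph.Walk.cons h p) = g u v + wsum g p := by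
  simp [wsum]

lemma wsum_append (g : V → V → ℝ) {u v w : V} (p : G.Walk u v) (q : G.Walk v w) :
    wsum g (p.append q) = wsum g p + wsum g q := by
  simp [wsum, SimpleGraph.Walk.darts_append]

lemma wsum_concat (g : V → V → ℝ) {u v w : V} (p : G.Walk u v) (h : G.Adj v w) :
    wsum g (p.concat h) = wsum g p + g v w := by
  simp [wsum, SimpleGraph.Walk.darts_concat]

lemma wsum_copy (g : V → V → ℝ) {u v u' v' : V} (p : G.Walk u v) (hu : u = u') (hv : v = v') :
    wsum g (p.copy hu hv) = wsum g p := by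
  simp [wsum, SimpleGraph.Walk.darts_copy]

lemma wsum_reverse (g : V → V → ℝ) (hg : ∀ x y, g x y = - g y x) {u v : V} (p : G.Walk u v) :
    wsum g p.reverse = - wsum g p := by
  simp only [wsum, SimpleGraph.Walk.darts_reverse, List.map_reverse, List.sum_reverse,
    List.map_map]
  rw [← neg_one_mul, ← List.sum_map_mul_left]
  congr 1
  apply List.map_congr_left
  intro d _
  simp [SimpleGraph.Dart.symm, hg d.toProd.2 d.toProd.1]

lemma wsum_rotate (g : V → V → ℝ) {u v : V} (c : G.Walk v v) (h : u ∈ c.support) :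
    wsum g (c.rotate u h) = wsum g c := by
  unfold wsum
  exact ((SimpleGraph.Walk.rotate_darts c u h).map _).perm.sum_eq

lemma wsum_closed (g : V → V → ℝ) (hg : ∀ x y, g x y = - g y x)
    (hK : ∀ (v : V) (c : G.Walk v v), c.IsCycle → wsum g c = 0) :
    ∀ (n : ℕ) (v : V) (c : G.Walk v v), c.length = n → wsum g c = 0 := by
  intro n
  induction n using Nat.strong_induction_on with
  | _ n ih =>
    intro v c hc
    cases c with
    | nil => simp [wsum]
    | @cons _ w _ h p =>
      by_cases hnd : (Walk.cons h p).support.tail.Nodup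
      · have hps : p.support.Nodup := by simpa using hnd
        have hp : p.IsPath := (Walk.isPath_def p).mpr hps
        by_cases he : s(v, w) ∈ p.edges
        · -- p must be the single edge w-v
          obtain ⟨d, hd, hde⟩ := List.mem_map.mp he
          cases p with
          | nil => simp at he
          | @cons _ x _ h₂ p₂ =>
            have hwx : w ∉ p₂.support := by
              simp only [Walk.support_cons, List.nodup_cons] at hps
              exact hps.1
            rw [Walk.darts_cons, List.mem_cons] at hd
            have hde' : s(d.toProd.1, d.toProd.2) = s(v, w) := hde
            rcases hd with hd | hd
            · subst hd
              rcases Sym2.eq_iff.mp hde' with ⟨hwv, hxw⟩ | ⟨hwv, hxv⟩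
              · exact absurd hwv.symm h.ne
              · subst hxv
                cases p₂ with
                | nil =>
                    have := hg x w
                    simp only [wsum, Walk.darts_cons, Walk.darts_nil, List.map_cons, List.map_nil,
                      List.sum_cons, List.sum_nil]
                    linarith
                | @cons _ y _ h₃ p₃ =>
                  exfalso
                  simp only [Walk.support_cons, List.nodup_cons] at hps
                  exact hps.2.1 p₃.end_mem_support
            · exfalso
              rcases Sym2.eq_iff.mp hde' with ⟨h1, h2⟩ | ⟨h1, h2⟩
              · exact hwx (h2 ▸ Walk.dart_snd_mem_support_of_mem_darts _ hd)
              · exact hwx (h1 ▸ Walk.dart_fst_mem_support_of_mem_darts _ hd)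
        · exact hK _ _ ((Walk.cons_isCycle_iff p h).mpr ⟨hp, he⟩)
      · -- repeated vertex: rotate and split
        obtain ⟨u, hu2⟩ : ∃ u, 1 < ((Walk.cons h p).support.tail.count u) := by
          by_contra h'
          push_neg at h'
          exact hnd (List.nodup_iff_count_le_one.mpr fun a => h' a)
        have hu : u ∈ (Walk.cons h p).support :=
          List.mem_of_mem_tail (List.count_pos_iff.mp (by omega))
        set c := Walk.cons h p with hcdef
        have hws : wsum g (c.rotate u hu) = wsum g c := wsum_rotate g c hu
        have hlen : (c.rotate u hu).length = n := by
          rw [← Walk.length_darts, ((Walk.rotate_darts c u hu).perm.length_eq), Walk.length_darts, hc]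
        have hcnt : 1 < ((c.rotate u hu).support.tail.count u) := by
          rwa [(Walk.support_rotate c u hu).perm.count_eq]
        rw [← hws]
        generalize hc' : c.rotate u hu = c' at *
        cases c' with
        | nil => simp at hcnt
        | @cons _ w' _ h' p' =>
          have hcnt' : 1 < p'.support.count u := by simpa using hcnt
          have hu' : u ∈ p'.support := p'.end_mem_support
          have hspec := Walk.take_spec p' hu'
          have hcnt_take : (p'.takeUntil u hu').support.count u = 1 :=
            Walk.count_support_takeUntil_eq_one p' hu'
          have hdropne : ¬ (p'.dropUntil u hu').support.tail = [] := by
            intro hnil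
            have := congrArg (fun l => List.count u l.support) hspec
            simp only [Walk.support_append, List.count_append] at this
            rw [hnil] at this
            simp [hcnt_take] at this
            omega
          have hdroplen : 1 ≤ (p'.dropUntil u hu').length := by
            have h1 : (p'.dropUntil u hu').support.tail.length
                = (p'.dropUntil u hu').support.length - 1 :=
              (p'.dropUntil u hu').support.length_tail
            have h2 : (p'.dropUntil u hu').support.length = (p'.dropUntil u hu').length + 1 :=
              (p'.dropUntil u hu').length_support
            have h3 := List.length_pos_iff.mpr hdropne
            omega
          have hlensum : (p'.takeUntil u hu').length + (p'.dropUntil u hu').length = p'.length := by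
            rw [← Walk.length_append, hspec]
          have hlen' : p'.length + 1 = n := by simpa using hlen
          have ih1 : wsum g (Walk.cons h' (p'.takeUntil u hu')) = 0 := by
            apply ih ((p'.takeUntil u hu').length + 1) (by omega)
            simp
          have ih2 : wsum g (p'.dropUntil u hu') = 0 := by
            apply ih ((p'.dropUntil u hu').length) (by omega)
            rfl
          calc wsum g (Walk.cons h' p') = g u w' + wsum g p' := wsum_cons g h' p'
          _ = g u w' + (wsum g (p'.takeUntil u hu') + wsum g (p'.dropUntil u hu')) := by
              rw [← wsum_append, hspec]
          _ = wsum g (Walk.cons h' (p'.takeUntil u hu')) + wsum g (p'.dropUntil u hu') := by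
              rw [wsum_cons]; ring
          _ = 0 := by rw [ih1, ih2]; ring

lemma list_sum_eq_toFinset_sum {α M : Type*} [DecidableEq α] [AddCommMonoid M]
    (l : List α) (h : l.Nodup) (F : α → M) : (l.map F).sum = ∑ a ∈ l.toFinset, F a := by
  induction l with
  | nil => simp
  | cons a l ih =>
    simp only [List.nodup_cons] at h
    rw [List.map_cons, List.sum_cons, List.toFinset_cons,
      Finset.sum_insert (by simpa using h.1), ih h.2]

noncomputable def totE (G : SimpleGraph V) (r : Sym2 V → ℝ) (f : V → V → ℝ) : ℝ≥0∞ :=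
  ∑' e : {e : V × V // G.Adj e.1 e.2},
      ENNReal.ofReal (f e.1.1 e.1.2 ^ 2 * r s(e.1.1, e.1.2))

lemma ray_sq_summable (r : Sym2 V → ℝ) (f : V → V → ℝ)
    (hr : ∀ e ∈ G.edgeSet, 0 < r e) (hT : totE G r f ≠ ⊤)
    (R : ℕ → V) (hRinj : Function.Injective R) (hRadj : ∀ i, G.Adj (R i) (R (i+1))) :
    Summable fun i : ℕ => f (R i) (R (i+1)) ^ 2 * r s(R i, R (i+1)) := by
  set ι : ℕ → {e : V × V // G.Adj e.1 e.2} := fun i => ⟨(R i, R (i+1)), hRadj i⟩ with hι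
  have hinj : Function.Injective ι := by
    intro i j hij
    simp only [hι, Subtype.mk.injEq, Prod.mk.injEq] at hij
    exact hRinj hij.1
  have hle : (∑' i, ENNReal.ofReal (f (R i) (R (i+1)) ^ 2 * r s(R i, R (i+1)))) ≤ totE G r f :=
    ENNReal.tsum_comp_le_tsum_of_injective hinj _
  have hsum := ENNReal.summable_toReal (fun h => hT (le_antisymm le_top (h ▸ hle)))
  refine hsum.congr fun i => ?_
  have hpos : 0 ≤ f (R i) (R (i+1)) ^ 2 * r s(R i, R (i+1)) :=
    mul_nonneg (sq_nonneg _) (hr _ ((G.mem_edgeSet).mpr (hRadj i))).le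
  exact ENNReal.toReal_ofReal hpos

lemma abs_fr_le (a re : ℝ) (hre : 0 ≤ re) : |a * re| ≤ (a ^ 2 * re + re) / 2 := by
  rw [abs_mul, abs_of_nonneg hre]
  nlinarith [sq_nonneg (|a| - 1), sq_abs a, abs_nonneg a]

lemma ray_abs_summable (r : Sym2 V → ℝ) (f : V → V → ℝ)
    (hr : ∀ e ∈ G.edgeSet, 0 < r e) (hT : totE G r f ≠ ⊤)
    (R : ℕ → V) (hRinj : Function.Injective R) (hRadj : ∀ i, G.Adj (R i) (R (i+1)))
    (hRfin : Summable fun i : ℕ => r s(R i, R (i + 1))) :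
    Summable fun i : ℕ => |f (R i) (R (i + 1)) * r s(R i, R (i + 1))| := by
  have hsq := ray_sq_summable r f hr hT R hRinj hRadj
  refine Summable.of_nonneg_of_le (fun i => abs_nonneg _) (fun i => ?_)
    ((hsq.add hRfin).div_const 2)
  exact abs_fr_le _ _ (hr _ ((G.mem_edgeSet).mpr (hRadj i))).le

lemma tendsto_E (r : Sym2 V → ℝ) (f : V → V → ℝ)
    (hr : ∀ e ∈ G.edgeSet, 0 < r e) (hT : totE G r f ≠ ⊤)
    (A B : ℕ → V) (P : ∀ k : ℕ, G.Walk (A k) (B k)) (hP : ∀ k, (P k).IsPath)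
    (hdisj : ∀ k l, k ≠ l → ∀ x, x ∈ (P k).support → x ∉ (P l).support) :
    Tendsto (fun k => ((P k).darts.map
      (fun d => f d.toProd.1 d.toProd.2 ^ 2 * r d.edge)).sum) atTop (nhds 0) := by
  set F : {e : V × V // G.Adj e.1 e.2} → ℝ≥0∞ :=
    fun e => ENNReal.ofReal (f e.1.1 e.1.2 ^ 2 * r s(e.1.1, e.1.2)) with hF
  set ι : G.Dart → {e : V × V // G.Adj e.1 e.2} := fun d => ⟨d.toProd, d.adj⟩ with hι
  have hinj : Function.Injective ι := fun d₁ d₂ h => by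
    apply SimpleGraph.Dart.ext
    simpa [hι] using h
  have hnodup : ∀ k, ((P k).darts).Nodup :=
    fun k => Walk.darts_nodup_of_support_nodup (hP k).support_nodup
  set D : ℕ → Finset G.Dart := fun k => ((P k).darts).toFinset with hD
  set Ehat : ℕ → ℝ≥0∞ := fun k => ∑ d ∈ D k, F (ι d) with hE
  have hEle : ∑' k, Ehat k ≤ totE G r f := by
    rw [ENNReal.tsum_eq_iSup_sum]
    refine iSup_le fun s => ?_
    have hdisjD : ∀ k ∈ (s : Set ℕ), ∀ l ∈ (s : Set ℕ), k ≠ l → Disjoint (D k) (D l) := by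
      intro k _ l _ hkl
      rw [Finset.disjoint_left]
      intro d hdk hdl
      exact hdisj k l hkl d.toProd.1
        (Walk.dart_fst_mem_support_of_mem_darts _ (List.mem_toFinset.mp hdk))
        (Walk.dart_fst_mem_support_of_mem_darts _ (List.mem_toFinset.mp hdl))
    calc ∑ k ∈ s, Ehat k = ∑ d ∈ s.biUnion D, F (ι d) := (Finset.sum_biUnion hdisjD).symm
    _ = ∑ e ∈ (s.biUnion D).image ι, F e :=
        (Finset.sum_image (fun a _ b _ h => hinj h)).symm
    _ ≤ totE G r f := ENNReal.sum_le_tsum _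
  have hsum := ENNReal.summable_toReal (fun h => hT (le_antisymm le_top (h ▸ hEle)))
  have hcongr : ∀ k, (Ehat k).toReal =
      ((P k).darts.map (fun d => f d.toProd.1 d.toProd.2 ^ 2 * r d.edge)).sum := by
    intro k
    rw [hE]
    rw [ENNReal.toReal_sum (fun d _ => ENNReal.ofReal_ne_top)]
    rw [list_sum_eq_toFinset_sum _ (hnodup k)]
    refine Finset.sum_congr rfl fun d _ => ?_
    exact ENNReal.toReal_ofReal (mul_nonneg (sq_nonneg _) (hr _ d.edge_mem).le)
  exact (hsum.congr hcongr).tendsto_atTop_zero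

lemma abs_wsum_le (r : Sym2 V → ℝ) (f : V → V → ℝ)
    (hr : ∀ e ∈ G.edgeSet, 0 < r e) {u v : V} (p : G.Walk u v) :
    |wsum (fun x y => f x y * r s(x, y)) p| ≤
      (((p.darts.map (fun d => f d.toProd.1 d.toProd.2 ^ 2 * r d.edge)).sum)
        + ((p.edges.map r).sum)) / 2 := by
  have hedges : (p.edges.map r) = p.darts.map (fun d => r d.edge) := by
    show ((p.darts.map SimpleGraph.Dart.edge).map r) = _
    rw [List.map_map]; rfl
  rw [hedges]
  unfold wsum
  induction p.darts with
  | nil => simp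
  | cons d l ih =>
    simp only [List.map_cons, List.sum_cons]
    have hb := abs_fr_le (f d.toProd.1 d.toProd.2) (r d.edge) (hr _ d.edge_mem).le
    calc |f d.toProd.1 d.toProd.2 * r s(d.toProd.1, d.toProd.2)
          + (l.map fun d => f d.toProd.1 d.toProd.2 * r s(d.toProd.1, d.toProd.2)).sum|
        ≤ |f d.toProd.1 d.toProd.2 * r s(d.toProd.1, d.toProd.2)|
          + |(l.map fun d => f d.toProd.1 d.toProd.2 * r s(d.toProd.1, d.toProd.2)).sum| :=
          abs_add_le _ _
      _ ≤ _ := by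
          have hb' : |f d.toProd.1 d.toProd.2 * r s(d.toProd.1, d.toProd.2)|
              ≤ (f d.toProd.1 d.toProd.2 ^ 2 * r d.edge + r d.edge) / 2 := hb
          linarith [ih]

noncomputable def rayWalk (G : SimpleGraph V) (R : ℕ → V)
    (hadj : ∀ i, G.Adj (R i) (R (i+1))) : ∀ n, G.Walk (R 0) (R n)
  | 0 => SimpleGraph.Walk.nil
  | n+1 => (rayWalk G R hadj n).concat (hadj n)

lemma wsum_rayWalk (g : V → V → ℝ) (R : ℕ → V) (hadj : ∀ i, G.Adj (R i) (R (i+1))) (n : ℕ) :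
    wsum g (rayWalk G R hadj n) = ∑ i ∈ Finset.range n, g (R i) (R (i+1)) := by
  induction n with
  | zero => simp [rayWalk]
  | succ n ih => rw [rayWalk, wsum_concat, ih, Finset.sum_range_succ]

end RayPotential


open Filter in
/-- Along any ray of finite total resistance starting at `q`, the potential
differences of a finite-energy flow satisfying Kirchhoff's cycle law are
absolutely summable, and the resulting sum does not depend on the ray,
provided the two rays are linked by disjoint paths of summable total
resistance as in the statement. -/
theorem potential_well_defined_on_rays
    {V : Type} [Countable V] (G : SimpleGraph V) (hconn : G.Connected)
    (hlf : ∀ v : V, (G.neighborSet v).Finite)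
    (r : Sym2 V → ℝ) (hr : ∀ e ∈ G.edgeSet, 0 < r e)
    (p q : V) (hpq : p ≠ q) (I : ℝ)
    (f : V → V → ℝ) (hf : IsFlow G p q I f)
    (hW : energy G r f < ⊤) (hK : CycleLaw G r f)
    (R : ℕ → V) (hRinj : Function.Injective R) (hR0 : R 0 = q)
    (hRadj : ∀ i : ℕ, G.Adj (R i) (R (i + 1)))
    (hRfin : Summable fun i : ℕ => r s(R i, R (i + 1))) :
    (Summable fun i : ℕ => |f (R i) (R (i + 1)) * r s(R i, R (i + 1))|) ∧
    ∀ (S : ℕ → V), Function.Injective S → S 0 = q →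
      (∀ i : ℕ, G.Adj (S i) (S (i + 1))) →
      (Summable fun i : ℕ => r s(S i, S (i + 1))) →
      ∀ (a b : ℕ → ℕ), StrictMono a → StrictMono b →
      ∀ (P : ∀ k : ℕ, G.Walk (R (a k)) (S (b k))),
        (∀ k, (P k).IsPath) →
        (∀ k l, k ≠ l → ∀ x, x ∈ (P k).support → x ∉ (P l).support) →
        (∀ k, ∀ x ∈ (P k).support,
          (x ∈ Set.range R → x = R (a k)) ∧ (x ∈ Set.range S → x = S (b k))) →
        (Summable fun k : ℕ => ((P k).edges.map r).sum) →
        ∑' i : ℕ, f (R i) (R (i + 1)) * r s(R i, R (i + 1)) =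
          ∑' i : ℕ, f (S i) (S (i + 1)) * r s(S i, S (i + 1)) := by
  classical
  have hT : RayPotential.totE G r f ≠ ⊤ := by
    intro h
    rw [energy] at hW
    rw [show (∑' e : {e : V × V // G.Adj e.1 e.2},
        ENNReal.ofReal (f e.1.1 e.1.2 ^ 2 * r s(e.1.1, e.1.2))) = RayPotential.totE G r f
        from rfl, h, ENNReal.top_div_of_ne_top (by norm_num)] at hW
    exact lt_irrefl _ hW
  have habsR := RayPotential.ray_abs_summable r f hr hT R hRinj hRadj hRfin
  refine ⟨habsR, ?_⟩
  intro S hSinj hS0 hSadj hSfin a b ha hb P hPpath hPdisj hPmeet hPsum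
  have habsS := RayPotential.ray_abs_summable r f hr hT S hSinj hSadj hSfin
  set g : V → V → ℝ := fun x y => f x y * r s(x, y) with hg
  have hganti : ∀ x y, g x y = - g y x := by
    intro x y
    simp only [hg]
    rw [hf.1 x y, Sym2.eq_swap]
    ring
  have hKw : ∀ (v : V) (c : G.Walk v v), c.IsCycle → RayPotential.wsum g c = 0 :=
    fun v c hcyc => hK v c hcyc
  have hgR : Summable fun i : ℕ => g (R i) (R (i+1)) := habsR.of_abs
  have hgS : Summable fun i : ℕ => g (S i) (S (i+1)) := habsS.of_abs
  -- the closed-walk identity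
  have hkey : ∀ k, (∑ i ∈ Finset.range (a k), g (R i) (R (i+1)))
      + RayPotential.wsum g (P k) - (∑ i ∈ Finset.range (b k), g (S i) (S (i+1))) = 0 := by
    intro k
    have hC : RayPotential.wsum g
        (((((RayPotential.rayWalk G R hRadj (a k)).append (P k)).append
          ((RayPotential.rayWalk G S hSadj (b k)).reverse)).copy hR0 hS0)) = 0 :=
      RayPotential.wsum_closed g hganti hKw _ q _ rfl
    rw [RayPotential.wsum_copy, RayPotential.wsum_append, RayPotential.wsum_append,
      RayPotential.wsum_reverse g hganti, RayPotential.wsum_rayWalk,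
      RayPotential.wsum_rayWalk] at hC
    linarith
  -- limits
  have htR : Tendsto (fun k => ∑ i ∈ Finset.range (a k), g (R i) (R (i+1))) atTop
      (nhds (∑' i : ℕ, g (R i) (R (i+1)))) :=
    (hgR.hasSum.tendsto_sum_nat).comp ha.tendsto_atTop
  have htS : Tendsto (fun k => ∑ i ∈ Finset.range (b k), g (S i) (S (i+1))) atTop
      (nhds (∑' i : ℕ, g (S i) (S (i+1)))) :=
    (hgS.hasSum.tendsto_sum_nat).comp hb.tendsto_atTop
  have htE := RayPotential.tendsto_E r f hr hT _ _ P hPpath hPdisj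
  have htr : Tendsto (fun k => ((P k).edges.map r).sum) atTop (nhds 0) :=
    hPsum.tendsto_atTop_zero
  have htP : Tendsto (fun k => RayPotential.wsum g (P k)) atTop (nhds 0) := by
    have hbound : ∀ k, ‖RayPotential.wsum g (P k)‖ ≤
        (((P k).darts.map (fun d => f d.toProd.1 d.toProd.2 ^ 2 * r d.edge)).sum
          + ((P k).edges.map r).sum) / 2 := fun k => by
      rw [Real.norm_eq_abs]; exact RayPotential.abs_wsum_le r f hr (P k)
    refine squeeze_zero_norm hbound ?_
    have := (htE.add htr).div_const 2
    simpa using this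
  have hfinal : Tendsto (fun k => (∑ i ∈ Finset.range (a k), g (R i) (R (i+1)))
      + RayPotential.wsum g (P k) - (∑ i ∈ Finset.range (b k), g (S i) (S (i+1)))) atTop
      (nhds ((∑' i : ℕ, g (R i) (R (i+1))) + 0 - (∑' i : ℕ, g (S i) (S (i+1))))) :=
    (htR.add htP).sub htS
  have h0 : (∑' i : ℕ, g (R i) (R (i+1))) + 0 - (∑' i : ℕ, g (S i) (S (i+1))) = 0 :=
    tendsto_nhds_unique hfinal (by simpa only [hkey] using (tendsto_const_nhds :
      Tendsto (fun _ : ℕ => (0:ℝ)) atTop (nhds 0)))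
  have : (∑' i : ℕ, g (R i) (R (i+1))) = (∑' i : ℕ, g (S i) (S (i+1))) := by linarith
  exact this
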